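/- Let A ∈ ℂ^{m×n×p}, W ∈ ℂ^{n×m×p}, rank_M(A) = rp, rank_M(W) = sp with sp ≤ rp. Suppose W *_M P = Q *_M R where: P ∈ ℂ^{m×m×p} satisfies P *_M P^* = I_M = P^* *_M P; Q ∈ ℂ^{n×n×p} satisfies Q *_M Q^* = I_M = Q^* *_M Q; R ∈ ℂ^{n×m×p} has rank_M(R) = sp and its horizontal slices s+1,…,n vanish. Let Q̃ = Q(:,1:s,:) and R̃ = R(1:s,:,:), and suppose rank_M(R̃) = sp. If X is an outer inverse of A with R_M(X) = R_M(W) and N_M(X) = N_M(W), then R_M(X) = R_M(Q̃) and N_M(X) = N_M(R̃ *_M P^*); i.e., A^=_{R_M(W),N_M(W)} = A^=_{R_M(Q̃),N_M(R̃ *_M P^*)}. -/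

import Mathlib

open Matrix Finset

/-- A third-order tensor in `ℂ^{m×n×p}`, given by its `p` frontal slices. -/
abbrev Tensor (m n p : ℕ) := Fin p → Matrix (Fin m) (Fin n) ℂ

/-- The transform `Â = A ×₃ M` (mode-3 product with `M`). -/
noncomputable def hatT {m n p : ℕ} (M : Matrix (Fin p) (Fin p) ℂ) (A : Tensor m n p) :
    Tensor m n p :=
  fun l => ∑ s, M l s • A s

/-- `mat(A)`: the block-diagonal matrix whose blocks are frontal slices of `A ×₃ M`. -/
noncomputable def matT {m n p : ℕ} (M : Matrix (Fin p) (Fin p) ℂ) (A : Tensor m n p) :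
    Matrix (Fin m × Fin p) (Fin n × Fin p) ℂ :=
  Matrix.blockDiagonal (hatT M A)

/-- The M-product `A *_M B`, determined by `mat(A *_M B) = mat(A)·mat(B)`. -/
noncomputable def mprod {m n k p : ℕ} (M : Matrix (Fin p) (Fin p) ℂ)
    (A : Tensor m n p) (B : Tensor n k p) : Tensor m k p :=
  fun l => ∑ s, M⁻¹ l s • (hatT M A s * hatT M B s)

/-- The conjugate transpose `A^*`, determined by `mat(A^*) = mat(A)^*`. -/
noncomputable def mstar {m n p : ℕ} (M : Matrix (Fin p) (Fin p) ℂ) (A : Tensor m n p) :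
    Tensor n m p :=
  fun l => ∑ s, M⁻¹ l s • (hatT M A s)ᴴ

/-- The identity tensor `I_M ∈ ℂ^{m×m×p}`, determined by `mat(I_M) = I`. -/
noncomputable def idT {p : ℕ} (M : Matrix (Fin p) (Fin p) ℂ) (m : ℕ) : Tensor m m p :=
  fun l => ∑ s, M⁻¹ l s • (1 : Matrix (Fin m) (Fin m) ℂ)

/-- M-product powers of a square tensor. -/
noncomputable def mpow {m p : ℕ} (M : Matrix (Fin p) (Fin p) ℂ) (A : Tensor m m p) :
    ℕ → Tensor m m p
  | 0 => idT M m
  | k + 1 => mprod M A (mpow M A k)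

/-- `R_M(A)`: the column space of `mat(A)`. -/
noncomputable def rangeM {m n p : ℕ} (M : Matrix (Fin p) (Fin p) ℂ) (A : Tensor m n p) :
    Submodule ℂ (Fin m × Fin p → ℂ) :=
  LinearMap.range (matT M A).mulVecLin

/-- `N_M(A)`: the kernel of `mat(A)`. -/
noncomputable def kerM {m n p : ℕ} (M : Matrix (Fin p) (Fin p) ℂ) (A : Tensor m n p) :
    Submodule ℂ (Fin n × Fin p → ℂ) :=
  LinearMap.ker (matT M A).mulVecLin

/-- `rank_M(A) = rank(mat(A))`. -/
noncomputable def rankM {m n p : ℕ} (M : Matrix (Fin p) (Fin p) ℂ) (A : Tensor m n p) : ℕ :=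
  (matT M A).rank

/-- The first `s` lateral slices `Q(:,1:s,:)`. -/
def latSlice {n s p : ℕ} (hsn : s ≤ n) (Q : Tensor n n p) : Tensor n s p :=
  fun l => (Q l).submatrix id (Fin.castLE hsn)

/-- The first `s` horizontal slices `R(1:s,:,:)`. -/
def horSlice {n m s p : ℕ} (hsn : s ≤ n) (R : Tensor n m p) : Tensor s m p :=
  fun l => (R l).submatrix (Fin.castLE hsn) id

/-- Frobenius norm of a complex matrix. -/
noncomputable def frobNorm {α β : Type*} [Fintype α] [Fintype β] (X : Matrix α β ℂ) : ℝ :=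
  Real.sqrt (∑ i, ∑ j, ‖X i j‖ ^ 2)
-- auxiliary lemmas
section AuxLemmas
variable {m n k p : ℕ} (M : Matrix (Fin p) (Fin p) ℂ)

lemma hatT_eval (hM : IsUnit M.det) (C : Fin p → Matrix (Fin m) (Fin n) ℂ) :
    hatT M (fun l => ∑ s, M⁻¹ l s • C s) = C := by
  funext l
  have h1 : ∀ s, (∑ t, M l t * M⁻¹ t s) = (1 : Matrix (Fin p) (Fin p) ℂ) l s := by
    intro s; rw [← Matrix.mul_nonsing_inv M hM, Matrix.mul_apply]
  show (∑ t, M l t • ∑ s, M⁻¹ t s • C s) = C l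
  calc (∑ t, M l t • ∑ s, M⁻¹ t s • C s)
      = ∑ s, (∑ t, M l t * M⁻¹ t s) • C s := by
        simp only [Finset.smul_sum, smul_smul]
        rw [Finset.sum_comm]
        simp [Finset.sum_smul]
    _ = C l := by simp [h1, Matrix.one_apply, ite_smul]

lemma hatT_mprod (hM : IsUnit M.det) (A : Tensor m n p) (B : Tensor n k p) :
    hatT M (mprod M A B) = fun l => hatT M A l * hatT M B l := by
  unfold mprod; exact hatT_eval M hM _

lemma hatT_mstar (hM : IsUnit M.det) (A : Tensor m n p) :
    hatT M (mstar M A) = fun l => (hatT M A l)ᴴ := by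
  unfold mstar; exact hatT_eval M hM _

lemma hatT_idT (hM : IsUnit M.det) :
    hatT M (idT M m) = fun _ => (1 : Matrix (Fin m) (Fin m) ℂ) := by
  unfold idT; exact hatT_eval M hM _

lemma matT_mprod (hM : IsUnit M.det) (A : Tensor m n p) (B : Tensor n k p) :
    matT M (mprod M A B) = matT M A * matT M B := by
  unfold matT
  rw [hatT_mprod M hM, Matrix.blockDiagonal_mul]

lemma matT_mstar (hM : IsUnit M.det) (A : Tensor m n p) :
    matT M (mstar M A) = (matT M A)ᴴ := by
  unfold matT
  rw [hatT_mstar M hM, Matrix.blockDiagonal_conjTranspose]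

lemma matT_idT (hM : IsUnit M.det) : matT M (idT M m) = 1 := by
  unfold matT
  rw [hatT_idT M hM]
  exact Matrix.blockDiagonal_one

end AuxLemmas

section Slice
variable {m n s p : ℕ} (M : Matrix (Fin p) (Fin p) ℂ)

lemma matT_latSlice (hsn : s ≤ n) (Q : Tensor n n p) :
    matT M (latSlice hsn Q)
      = (matT M Q).submatrix id (Prod.map (Fin.castLE hsn) id) := by
  ext ⟨i, l⟩ ⟨j, l'⟩
  by_cases h : l = l' <;>
    simp [matT, hatT, latSlice, Matrix.blockDiagonal_apply, Matrix.submatrix_apply,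
      Matrix.sum_apply, Matrix.smul_apply, h]

lemma matT_horSlice (hsn : s ≤ n) (R : Tensor n m p) :
    matT M (horSlice hsn R)
      = (matT M R).submatrix (Prod.map (Fin.castLE hsn) id) id := by
  ext ⟨i, l⟩ ⟨j, l'⟩
  by_cases h : l = l' <;>
    simp [matT, hatT, horSlice, Matrix.blockDiagonal_apply, Matrix.submatrix_apply,
      Matrix.sum_apply, Matrix.smul_apply, h]

end Slice

/-- Theorem 3.3 (c): the outer inverse determined by `W` has range `R_M(Q̃)` and
null space `N_M(R̃ *_M P^*)`. -/
theorem outer_inverse_MQR_range_null {m n p r s : ℕ} (hsn : s ≤ n)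
    (M : Matrix (Fin p) (Fin p) ℂ) (hM : IsUnit M.det)
    (A : Tensor m n p) (W : Tensor n m p)
    (P : Tensor m m p) (Q : Tensor n n p) (R : Tensor n m p)
    (hrA : rankM M A = r * p) (hrW : rankM M W = s * p) (hle : s * p ≤ r * p)
    (hQR : mprod M W P = mprod M Q R)
    (hP1 : mprod M P (mstar M P) = idT M m) (hP2 : mprod M (mstar M P) P = idT M m)
    (hQ1 : mprod M Q (mstar M Q) = idT M n) (hQ2 : mprod M (mstar M Q) Q = idT M n)
    (hrR : rankM M R = s * p)
    (hRvanish : ∀ l (i : Fin n), s ≤ (i : ℕ) → ∀ j, R l i j = 0)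
    (hrRt : rankM M (horSlice hsn R) = s * p)
    (X : Tensor n m p)
    (hout : mprod M X (mprod M A X) = X)
    (hRX : rangeM M X = rangeM M W) (hNX : kerM M X = kerM M W) :
    rangeM M X = rangeM M (latSlice hsn Q) ∧
      kerM M X = kerM M (mprod M (horSlice hsn R) (mstar M P)) := by
  classical
  set PM := matT M P with hPMdef
  set QM := matT M Q with hQMdef
  set RM := matT M R with hRMdef
  set WM := matT M W with hWMdef
  set c : Fin s × Fin p → Fin n × Fin p := Prod.map (Fin.castLE hsn) id with hcdef
  -- unitarity at matrix level
  have hPP : PM * PMᴴ = 1 := by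
    have h := congrArg (matT M) hP1
    rwa [matT_mprod M hM, matT_mstar M hM, matT_idT M hM] at h
  have hPP2 : PMᴴ * PM = 1 := by
    have h := congrArg (matT M) hP2
    rwa [matT_mprod M hM, matT_mstar M hM, matT_idT M hM] at h
  have hQQ2 : QMᴴ * QM = 1 := by
    have h := congrArg (matT M) hQ2
    rwa [matT_mprod M hM, matT_mstar M hM, matT_idT M hM] at h
  -- W = Q R Pᴴ
  have hW : WM = QM * RM * PMᴴ := by
    have h := congrArg (matT M) hQR
    rw [matT_mprod M hM, matT_mprod M hM] at h
    calc WM = WM * (PM * PMᴴ) := by rw [hPP, Matrix.mul_one]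
      _ = (WM * PM) * PMᴴ := by rw [Matrix.mul_assoc]
      _ = QM * RM * PMᴴ := by rw [← hWMdef, ← hPMdef] at h; rw [h]
  -- rows of RM beyond s vanish
  have hRrow : ∀ (x : Fin n × Fin p), s ≤ (x.1 : ℕ) → ∀ b, RM x b = 0 := by
    rintro ⟨i, l⟩ hi ⟨j, l'⟩
    simp only [hRMdef, matT, Matrix.blockDiagonal_apply, hatT, Matrix.sum_apply,
      Matrix.smul_apply, smul_eq_mul]
    by_cases h : l = l' <;> simp [h, hRvanish _ _ hi]
  -- Q R = Q̃ R̃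
  have hQRslice : QM * RM = matT M (latSlice hsn Q) * matT M (horSlice hsn R) := by
    rw [matT_latSlice M hsn, matT_horSlice M hsn]
    ext a b
    rw [Matrix.mul_apply, Matrix.mul_apply]
    have hinj : Function.Injective c := by
      rintro ⟨i, l⟩ ⟨i', l'⟩ h
      simp only [hcdef, Prod.map, Prod.mk.injEq, id] at h
      obtain ⟨h1, h2⟩ := h
      exact Prod.ext (Fin.castLE_injective hsn h1) h2
    simp only [Matrix.submatrix_apply, id_eq, ← hQMdef, ← hRMdef, ← hcdef]
    have himg : (∑ x : Fin s × Fin p, QM a (c x) * RM (c x) b)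
        = ∑ x ∈ Finset.univ.image c, QM a x * RM x b :=
      (Finset.sum_image (f := fun x => QM a x * RM x b) (g := c)
        (fun x _ y _ h => hinj h)).symm
    rw [himg]
    symm
    apply Finset.sum_subset (Finset.subset_univ _)
    intro x _ hx
    have hxs : s ≤ (x.1 : ℕ) := by
      by_contra hlt
      push_neg at hlt
      exact hx (Finset.mem_image.2 ⟨(⟨x.1.1, hlt⟩, x.2), Finset.mem_univ _, by
        simp [hcdef, Prod.map]⟩)
    rw [hRrow x hxs b, mul_zero]
  -- P surjective, Q injective (as mulVec maps)
  have hPsurj : LinearMap.range (PMᴴ).mulVecLin = ⊤ := by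
    rw [LinearMap.range_eq_top]
    intro y
    exact ⟨PM.mulVec y, by
      simp [Matrix.mulVecLin_apply, Matrix.mulVec_mulVec, hPP2]⟩
  have hQinjvec : ∀ u, QM.mulVec u = 0 → u = 0 := by
    intro u hu
    have := congrArg (QMᴴ.mulVec) hu
    rwa [Matrix.mulVec_mulVec, hQQ2, Matrix.one_mulVec, Matrix.mulVec_zero] at this
  -- range part
  have hrange : rangeM M X = rangeM M (latSlice hsn Q) := by
    have e1 : rangeM M X = LinearMap.range (QM * RM).mulVecLin := by
      rw [hRX]
      show LinearMap.range WM.mulVecLin = _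
      rw [hW, Matrix.mulVecLin_mul]
      exact LinearMap.range_comp_of_range_eq_top _ hPsurj
    have e2 : rangeM M X ≤ rangeM M (latSlice hsn Q) := by
      rw [e1, hQRslice, Matrix.mulVecLin_mul]
      exact LinearMap.range_comp_le_range _ _
    refine (Submodule.eq_of_le_of_finrank_le e2 ?_).symm |>.symm
    have h1 : Module.finrank ℂ (rangeM M (latSlice hsn Q)) ≤ s * p := by
      have := Matrix.rank_le_card_width (matT M (latSlice hsn Q))
      simp only [Fintype.card_prod, Fintype.card_fin] at this
      exact this
    have h2 : Module.finrank ℂ (rangeM M X) = s * p := by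
      rw [hRX]; exact hrW
    rw [h2]; exact h1
  refine ⟨hrange, ?_⟩
  -- kernel part
  have hBt : matT M (mprod M (horSlice hsn R) (mstar M P))
      = (RM * PMᴴ).submatrix c id := by
    rw [matT_mprod M hM, matT_mstar M hM, matT_horSlice M hsn]
    ext a b
    simp [Matrix.mul_apply, Matrix.submatrix_apply]
    rfl
  have hkeriff : ∀ v, WM.mulVec v = 0 ↔ ((RM * PMᴴ).submatrix c id).mulVec v = 0 := by
    intro v
    have hsub : ∀ y, ((RM * PMᴴ).submatrix c id).mulVec v y
        = (RM * PMᴴ).mulVec v (c y) := by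
      intro y
      simp [Matrix.mulVec, dotProduct, Matrix.submatrix_apply]
    have hWv : WM.mulVec v = QM.mulVec ((RM * PMᴴ).mulVec v) := by
      rw [hW, Matrix.mul_assoc, ← Matrix.mulVec_mulVec]
    constructor
    · intro h
      have h0 : (RM * PMᴴ).mulVec v = 0 := by
        apply hQinjvec
        rw [← hWv]; exact h
      funext y
      rw [hsub y, h0]
      rfl
    · intro h
      have h0 : (RM * PMᴴ).mulVec v = 0 := by
        funext x
        obtain ⟨i, l⟩ := x
        by_cases hi : (i : ℕ) < s
        · have := congrFun h (⟨i, hi⟩, l)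
          rw [hsub] at this
          have hcx : c (⟨(i : ℕ), hi⟩, l) = (i, l) := by
            simp [hcdef, Prod.map]
          rw [hcx] at this
          exact this
        · push_neg at hi
          show ((RM * PMᴴ).mulVec v) (i, l) = 0
          have hrow : ∀ b, (RM * PMᴴ) (i, l) b = 0 := by
            intro b
            rw [Matrix.mul_apply]
            exact Finset.sum_eq_zero fun j _ => by rw [hRrow (i, l) hi j, zero_mul]
          simp [Matrix.mulVec, dotProduct, hrow]
      rw [hWv, h0, Matrix.mulVec_zero]
  rw [hNX]
  unfold kerM
  rw [hBt]
  ext v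
  simp only [LinearMap.mem_ker, Matrix.mulVecLin_apply]
  exact hkeriff v
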